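/- Under the hypotheses of the preceding statement, the minimizer of the posterior expected loss Λ over {(ℓ, u) : ℓ ≤ u} is unique: for all reals ℓ ≤ u with (ℓ, u) ≠ (x̄ - t s/√n, x̄ + t s/√n), one has Λ(ℓ, u) > Λ(x̄ - t s/√n, x̄ + t s/√n). -/

import Mathlib

open MeasureTheory

/-- Student t pdf with `m` degrees of freedom. -/
noncomputable def tPdf (m : ℕ) (x : ℝ) : ℝ :=
  (Real.Gamma (((m : ℝ) + 1) / 2) / (Real.sqrt ((m : ℝ) * Real.pi) * Real.Gamma ((m : ℝ) / 2))) *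
    (1 + x ^ 2 / (m : ℝ)) ^ (-(((m : ℝ) + 1) / 2))

/-- Student t cdf with `m` degrees of freedom. -/
noncomputable def tCdf (m : ℕ) (x : ℝ) : ℝ :=
  ∫ u in Set.Iic x, tPdf m u

lemma tPdf_pos {m : ℕ} (hm : 1 ≤ m) (x : ℝ) : 0 < tPdf m x := by
  have hm0 : (0:ℝ) < m := by exact_mod_cast hm
  have h1 : (0:ℝ) < 1 + x ^ 2 / m := by positivity
  have hg1 : 0 < Real.Gamma (((m : ℝ) + 1) / 2) := Real.Gamma_pos_of_pos (by linarith)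
  have hg2 : 0 < Real.Gamma ((m : ℝ) / 2) := Real.Gamma_pos_of_pos (by positivity)
  have hs : 0 < Real.sqrt ((m : ℝ) * Real.pi) := Real.sqrt_pos.2 (by positivity)
  have := Real.rpow_pos_of_pos h1 (-(((m : ℝ) + 1) / 2))
  unfold tPdf
  positivity

lemma continuous_tPdf (m : ℕ) (hm : 1 ≤ m) : Continuous (tPdf m) := by
  have hm0 : (0:ℝ) < m := by exact_mod_cast hm
  apply Continuous.mul continuous_const
  apply Continuous.rpow_const
  · continuity
  · intro x; left; positivity

lemma tPdf_lt {m : ℕ} (hm : 1 ≤ m) {x y : ℝ} (h : x ^ 2 < y ^ 2) : tPdf m y < tPdf m x := by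
  have hm0 : (0:ℝ) < m := by exact_mod_cast hm
  have hg1 : 0 < Real.Gamma (((m : ℝ) + 1) / 2) := Real.Gamma_pos_of_pos (by linarith)
  have hg2 : 0 < Real.Gamma ((m : ℝ) / 2) := Real.Gamma_pos_of_pos (by positivity)
  have hs : 0 < Real.sqrt ((m : ℝ) * Real.pi) := Real.sqrt_pos.2 (by positivity)
  have hC : 0 < Real.Gamma (((m : ℝ) + 1) / 2) / (Real.sqrt ((m : ℝ) * Real.pi) * Real.Gamma ((m : ℝ) / 2)) := by positivity
  unfold tPdf
  apply mul_lt_mul_of_pos_left _ hC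
  apply Real.rpow_lt_rpow_of_neg (by positivity)
  · have : x ^ 2 / m < y ^ 2 / m := by
      exact div_lt_div_of_pos_right h hm0
    linarith
  · have : (0:ℝ) < ((m:ℝ)+1)/2 := by linarith
    linarith

lemma key_integral {φ : ℝ → ℝ} (hc : Continuous φ) {t : ℝ} (ht : 0 < t)
    (hng : ∀ x ∈ Set.Ioo (-t) t, φ x < 0)
    (hnp : ∀ x ∈ Set.Icc (-t) t, φ x ≤ 0)
    (hposR : ∀ x : ℝ, t < x → 0 < φ x)
    (hposL : ∀ x : ℝ, x < -t → 0 < φ x)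
    (hnnR : ∀ x : ℝ, t ≤ x → 0 ≤ φ x)
    (hnnL : ∀ x : ℝ, x ≤ -t → 0 ≤ φ x)
    {a b : ℝ} (hab : a ≤ b) (hne : (a, b) ≠ (-t, t)) :
    (∫ x in (-t)..t, φ x) < ∫ x in a..b, φ x := by
  set c : ℝ := -t with hc'
  have hct : c < t := by simp only [hc']; linarith
  have hI : ∀ x y : ℝ, IntervalIntegrable φ volume x y := fun x y => hc.intervalIntegrable x y
  have add : ∀ x y z : ℝ, (∫ u in x..y, φ u) + ∫ u in y..z, φ u = ∫ u in x..z, φ u :=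
    fun x y z => intervalIntegral.integral_add_adjacent_intervals (hI x y) (hI y z)
  have HnnL : ∀ x y : ℝ, x ≤ y → y ≤ c → 0 ≤ ∫ u in x..y, φ u := by
    intro x y hxy hyc
    exact intervalIntegral.integral_nonneg hxy (fun u hu => hnnL u (le_trans hu.2 hyc))
  have HnnR : ∀ x y : ℝ, t ≤ x → x ≤ y → 0 ≤ ∫ u in x..y, φ u := by
    intro x y htx hxy
    exact intervalIntegral.integral_nonneg hxy (fun u hu => hnnR u (le_trans htx hu.1))
  have Hnp : ∀ x y : ℝ, c ≤ x → x ≤ y → y ≤ t → (∫ u in x..y, φ u) ≤ 0 := by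
    intro x y hcx hxy hyt
    have := intervalIntegral.integral_nonneg (f := fun u => -φ u) (μ := volume) hxy
      (fun u hu => by
        have := hnp u ⟨le_trans hcx hu.1, le_trans hu.2 hyt⟩
        show 0 ≤ -φ u
        linarith)
    rw [intervalIntegral.integral_neg] at this
    linarith
  have HposR : ∀ x y : ℝ, t ≤ x → x < y → 0 < ∫ u in x..y, φ u := by
    intro x y htx hxy
    exact intervalIntegral.intervalIntegral_pos_of_pos_on (hI x y)
      (fun u hu => hposR u (lt_of_le_of_lt htx hu.1)) hxy
  have HposL : ∀ x y : ℝ, x < y → y ≤ c → 0 < ∫ u in x..y, φ u := by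
    intro x y hxy hyc
    exact intervalIntegral.intervalIntegral_pos_of_pos_on (hI x y)
      (fun u hu => hposL u (lt_of_lt_of_le hu.2 hyc)) hxy
  have Hneg : ∀ x y : ℝ, c ≤ x → x < y → y ≤ t → (∫ u in x..y, φ u) < 0 := by
    intro x y hcx hxy hyt
    have := intervalIntegral.intervalIntegral_pos_of_pos_on (f := fun u => -φ u) (a := x) (b := y)
      ((hc.neg).intervalIntegrable x y)
      (fun u hu => by
        have := hng u ⟨lt_of_le_of_lt hcx hu.1, lt_of_lt_of_le hu.2 hyt⟩
        show 0 < -φ u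
        linarith) hxy
    rw [intervalIntegral.integral_neg] at this
    linarith
  have Hct : (∫ u in c..t, φ u) < 0 := Hneg c t le_rfl hct le_rfl
  rcases lt_or_ge b c with h1 | h1
  · -- a ≤ b < c
    have h2 : 0 ≤ ∫ u in a..b, φ u := HnnL a b hab h1.le
    linarith
  · -- b ≥ c
    -- subclaim: ∫ c..b ≥ ∫ c..t, strict if b ≠ t
    have claimA : (∫ u in c..t, φ u) ≤ ∫ u in c..b, φ u := by
      rcases le_or_gt b t with hbt | hbt
      · have := add c b t
        have := Hnp b t h1 hbt le_rfl
        linarith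
      · have := add c t b
        have := HnnR t b le_rfl hbt.le
        linarith
    have claimA' : b ≠ t → (∫ u in c..t, φ u) < ∫ u in c..b, φ u := by
      intro hbne
      rcases lt_or_ge b t with hbt | hbt
      · have := add c b t
        have := Hneg b t h1 hbt le_rfl
        linarith
      · have hbt' : t < b := lt_of_le_of_ne hbt (Ne.symm hbne)
        have := add c t b
        have := HposR t b le_rfl hbt'
        linarith
    rcases lt_or_ge a c with h2 | h2
    · -- a < c ≤ b : ∫ a..b = ∫ a..c + ∫ c..b, first strictly positive
      have := add a c b
      have := HposL a c h2 le_rfl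
      linarith
    · -- c ≤ a ≤ b
      rcases le_or_gt a t with h3 | h3
      · -- c ≤ a ≤ t : ∫ c..b = ∫ c..a + ∫ a..b
        have hadd := add c a b
        rcases eq_or_lt_of_le h2 with h4 | h4
        · -- a = c, then b ≠ t
          have hbne : b ≠ t := by
            intro hb; exact hne (by rw [← h4, hb])
          have := claimA' hbne
          have := Hnp c a le_rfl h2 h3
          linarith
        · have := Hneg c a le_rfl h4 h3
          linarith
      · -- t < a ≤ b
        have := HnnR a b h3.le hab
        linarith

lemma tPdf_le {m : ℕ} (hm : 1 ≤ m) {x y : ℝ} (h : x ^ 2 ≤ y ^ 2) : tPdf m y ≤ tPdf m x := by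
  rcases eq_or_lt_of_le h with h | h
  · unfold tPdf; rw [h]
  · exact (tPdf_lt hm h).le

set_option maxHeartbeats 1000000 in
/-- Under the hypotheses of STATEMENT 11, the minimizer of the posterior
expected loss `Λ` over `{ℓ ≤ u}` is unique: for all `ℓ ≤ u` with
`(ℓ, u) ≠ (x̄ - t s/√n, x̄ + t s/√n)`, `Λ(ℓ, u) > Λ(x̄ - t s/√n, x̄ + t s/√n)`. -/
theorem stmt12 (n : ℕ) (hn : 2 ≤ n) (xbar : ℝ) (s : ℝ) (hs : 0 < s)
    (α : ℝ) (hα0 : 0 < α) (hα1 : α < 1)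
    (t : ℝ) (ht : 0 < t) (htα : tCdf (n - 1) t - tCdf (n - 1) (-t) = 1 - α)
    (c₁ k : ℝ)
    (hc₁ : c₁ = (Real.Gamma ((n : ℝ) / 2) / Real.Gamma (((n : ℝ) - 1) / 2)) *
      Real.sqrt (2 / ((n : ℝ) - 1)))
    (hk : k = c₁ / (Real.sqrt n * tPdf (n - 1) t))
    (Λ : ℝ → ℝ → ℝ)
    (hΛ : ∀ l u : ℝ, Λ l u = c₁ * (u - l) / s -
      k * (tCdf (n - 1) (Real.sqrt n * (u - xbar) / s) -
           tCdf (n - 1) (Real.sqrt n * (l - xbar) / s)))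
    (l u : ℝ) (hlu : l ≤ u)
    (hne : (l, u) ≠ (xbar - t * s / Real.sqrt n, xbar + t * s / Real.sqrt n)) :
    Λ (xbar - t * s / Real.sqrt n) (xbar + t * s / Real.sqrt n) < Λ l u := by
  set m : ℕ := n - 1 with hm'
  have hm : 1 ≤ m := by omega
  have hn2 : (2:ℝ) ≤ (n:ℝ) := by exact_mod_cast hn
  have hf := tPdf_pos hm
  have hfc := continuous_tPdf m hm
  have hsn : 0 < Real.sqrt n := Real.sqrt_pos.2 (by linarith)
  have hc₁0 : 0 < c₁ := by
    rw [hc₁]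
    have h1 : 0 < Real.Gamma ((n:ℝ)/2) := Real.Gamma_pos_of_pos (by linarith)
    have h2 : 0 < Real.Gamma (((n:ℝ)-1)/2) := Real.Gamma_pos_of_pos (by linarith)
    have h3 : 0 < Real.sqrt (2/((n:ℝ)-1)) := Real.sqrt_pos.2 (div_pos (by norm_num) (by linarith))
    positivity
  have hk0 : 0 < k := by
    rw [hk]; exact div_pos hc₁0 (mul_pos hsn (hf t))
  have hkc : c₁ = k * (Real.sqrt n * tPdf m t) := by
    rw [hk, div_mul_cancel₀ _ (mul_pos hsn (hf t)).ne']
  -- integrability of tPdf on all Iic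
  by_cases hP : IntegrableOn (tPdf m) (Set.Iic t) volume
  · have hIic : ∀ y : ℝ, IntegrableOn (tPdf m) (Set.Iic y) volume := by
      intro y
      rcases le_or_gt y t with h | h
      · exact hP.mono_set (Set.Iic_subset_Iic.2 h)
      · have hIcc : IntegrableOn (tPdf m) (Set.Icc t y) volume :=
          hfc.integrableOn_Icc
        have : Set.Iic y ⊆ Set.Iic t ∪ Set.Icc t y := by
          intro x hx
          rcases le_or_gt x t with h1 | h1
          · exact Or.inl h1
          · exact Or.inr ⟨h1.le, hx⟩
        exact (hP.union hIcc).mono_set this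
    have hdiff : ∀ x y : ℝ, tCdf m y - tCdf m x = ∫ u in x..y, tPdf m u := by
      intro x y
      exact intervalIntegral.integral_Iic_sub_Iic (hIic x) (hIic y)
    -- the substituted endpoints
    set a : ℝ := Real.sqrt n * (l - xbar) / s with ha'
    set b : ℝ := Real.sqrt n * (u - xbar) / s with hb'
    have hA : Real.sqrt n * ((xbar - t * s / Real.sqrt n) - xbar) / s = -t := by
      field_simp
      ring
    have hB : Real.sqrt n * ((xbar + t * s / Real.sqrt n) - xbar) / s = t := by
      field_simp
      ring
    have hab : a ≤ b := by
      rw [ha', hb']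
      gcongr
    have hne' : (a, b) ≠ (-t, t) := by
      intro h
      apply hne
      have h1 : a = -t := (Prod.mk.injEq _ _ _ _ ▸ h).1
      have h2 : b = t := (Prod.mk.injEq _ _ _ _ ▸ h).2
      rw [ha'] at h1; rw [hb'] at h2
      have hl : l = xbar - t * s / Real.sqrt n := by
        field_simp at h1 ⊢
        nlinarith [h1]
      have hu : u = xbar + t * s / Real.sqrt n := by
        field_simp at h2 ⊢
        nlinarith [h2]
      rw [hl, hu]
    -- rewrite Λ as k times an interval integral of φ
    set φ : ℝ → ℝ := fun x => tPdf m t - tPdf m x with hφ'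
    have hφc : Continuous φ := continuous_const.sub hfc
    have hint : ∀ x y : ℝ, (∫ v in x..y, φ v) =
        tPdf m t * (y - x) - ∫ v in x..y, tPdf m v := by
      intro x y
      rw [hφ']
      rw [intervalIntegral.integral_sub (intervalIntegrable_const) (hfc.intervalIntegrable x y)]
      rw [intervalIntegral.integral_const]
      ring_nf
    have hΛeq : ∀ p q : ℝ, Λ p q = k * ∫ v in (Real.sqrt n * (p - xbar) / s)..(Real.sqrt n * (q - xbar) / s), φ v := by
      intro p q
      rw [hΛ p q, hint, ← hdiff]
      have hq : Real.sqrt n * (q - xbar) / s - Real.sqrt n * (p - xbar) / s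
          = Real.sqrt n * (q - p) / s := by ring
      rw [hq, hkc]
      ring
    have goal1 : Λ (xbar - t * s / Real.sqrt n) (xbar + t * s / Real.sqrt n)
        = k * ∫ v in (-t)..t, φ v := by
      rw [hΛeq, hA, hB]
    have goal2 : Λ l u = k * ∫ v in a..b, φ v := hΛeq l u
    rw [goal1, goal2]
    apply mul_lt_mul_of_pos_left _ hk0
    apply key_integral hφc ht _ _ _ _ _ _ hab hne'
    · intro x hx
      have : x ^ 2 < t ^ 2 := sq_lt_sq' hx.1 hx.2
      have := tPdf_lt hm this
      show tPdf m t - tPdf m x < 0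
      linarith
    · intro x hx
      have : x ^ 2 ≤ t ^ 2 := sq_le_sq' hx.1 hx.2
      have := tPdf_le hm this
      show tPdf m t - tPdf m x ≤ 0
      linarith
    · intro x hx
      have : t ^ 2 < x ^ 2 := by nlinarith
      have := tPdf_lt hm this
      show 0 < tPdf m t - tPdf m x
      linarith
    · intro x hx
      have : t ^ 2 < x ^ 2 := by nlinarith
      have := tPdf_lt hm this
      show 0 < tPdf m t - tPdf m x
      linarith
    · intro x hx
      have : t ^ 2 ≤ x ^ 2 := by nlinarith
      have := tPdf_le hm this
      show 0 ≤ tPdf m t - tPdf m x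
      linarith
    · intro x hx
      have : t ^ 2 ≤ x ^ 2 := by nlinarith
      have := tPdf_le hm this
      show 0 ≤ tPdf m t - tPdf m x
      linarith
  · -- non-integrable case: contradiction with htα
    exfalso
    have h1 : tCdf m t = 0 := by
      unfold tCdf
      exact integral_undef hP
    have h2 : tCdf m (-t) = 0 := by
      unfold tCdf
      apply integral_undef
      intro h
      have h' : IntegrableOn (tPdf m) (Set.Iic (-t)) volume := h
      apply hP
      have hIcc : IntegrableOn (tPdf m) (Set.Icc (-t) t) volume := hfc.integrableOn_Icc
      have : Set.Iic t ⊆ Set.Iic (-t) ∪ Set.Icc (-t) t := by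
        intro x hx
        rcases le_or_gt x (-t) with h1 | h1
        · exact Or.inl h1
        · exact Or.inr ⟨h1.le, hx⟩
      exact (h'.union hIcc).mono_set this
    rw [h1, h2] at htα
    simp at htα
    linarith
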